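/- Let · : A ⊗ H → A be a symmetric right partial action of a Hopf algebra H on an algebra A. Then the product (k⊗b)(h⊗a) = kh_(1) ⊗ (b·h_(2))a on H⊗A is associative, and the subspace H#A := (1_H⊗1_A)(H⊗A), spanned by elements h#a = h_(1) ⊗ (1_A·h_(2))a, is a unital algebra with unit 1_H#1_A. -/

import Mathlib

open TensorProduct

section Smash

variable {k H A : Type*} [CommRing k] [Ring H] [HopfAlgebra k H] [Ring A] [Algebra k A]

/-- The smash-type multiplication on `H ⊗ A` associated to a bilinear multiplication
`mH` on `H` (e.g. the given or the opposite one) and a right action-type map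
`ract : A →ₗ H →ₗ A`:  on pure tensors,
`(g ⊗ b)(h ⊗ a) = Σ mH g h₍₁₎ ⊗ (b·h₍₂₎) a`. -/
noncomputable def rsmashMul (mH : H →ₗ[k] H →ₗ[k] H) (ract : A →ₗ[k] H →ₗ[k] A) :
    (H ⊗[k] A) ⊗[k] (H ⊗[k] A) →ₗ[k] H ⊗[k] A :=
  (TensorProduct.map (TensorProduct.lift mH)
      ((LinearMap.mul' k A) ∘ₗ (LinearMap.rTensor A (TensorProduct.lift ract)) ∘ₗ
        (TensorProduct.assoc k A H A).symm.toLinearMap)) ∘ₗ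
  (TensorProduct.tensorTensorTensorComm k H A H (H ⊗[k] A)).toLinearMap ∘ₗ
  (LinearMap.lTensor (H ⊗[k] A)
      ((TensorProduct.assoc k H H A).toLinearMap ∘ₗ
        (LinearMap.rTensor A (Coalgebra.comul (R := k)))))

/-- The curried (bilinear) form of the smash-type multiplication. -/
noncomputable def rsmashMul₂ (mH : H →ₗ[k] H →ₗ[k] H) (ract : A →ₗ[k] H →ₗ[k] A) :
    (H ⊗[k] A) →ₗ[k] (H ⊗[k] A) →ₗ[k] H ⊗[k] A :=
  TensorProduct.curry (rsmashMul mH ract)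

/-- The right partial smash product `H # A := (1_H ⊗ 1_A)(H ⊗ A)`, spanned by the
elements `h # a := (1 ⊗ 1)(h ⊗ a) = Σ h₍₁₎ ⊗ (1·h₍₂₎)a`. -/
noncomputable def rsmashSub (mH : H →ₗ[k] H →ₗ[k] H) (ract : A →ₗ[k] H →ₗ[k] A) :
    Submodule k (H ⊗[k] A) :=
  Submodule.span k
    {z | ∃ (h : H) (a : A), z = rsmashMul₂ mH ract ((1 : H) ⊗ₜ (1 : A)) (h ⊗ₜ a)}

end Smash

/-- Sweedler-style sum `h ↦ Σ f(h₍₁₎) * g(h₍₂₎)`. -/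
noncomputable def sweedler {k H B : Type*} [CommRing k] [Ring H] [HopfAlgebra k H]
    [AddCommGroup B] [Module k B]
    (mul : B →ₗ[k] B →ₗ[k] B) (f g : H →ₗ[k] B) : H →ₗ[k] B :=
  TensorProduct.lift ((mul ∘ₗ f).compl₂ g) ∘ₗ Coalgebra.comul

/-- A symmetric right partial action of a Hopf algebra `H` on `A`:
(RPA1) `a·1 = a`; (RPA2) `(ab)·h = (a·h₍₁₎)(b·h₍₂₎)`;
(RPA3) `(a·g)·h = (a·gh₍₁₎)(1·h₍₂₎) = (1·h₍₁₎)(a·gh₍₂₎)`. -/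
structure IsRightPartialAction (k : Type*) {H A : Type*} [CommRing k] [Ring H]
    [HopfAlgebra k H] [Ring A] [Algebra k A] (ract : A →ₗ[k] H →ₗ[k] A) : Prop where
  rpa1 : ∀ a : A, ract a 1 = a
  rpa2 : ∀ (a b : A) (h : H),
    ract (a * b) h = sweedler (LinearMap.mul k A) (ract a) (ract b) h
  rpa3 : ∀ (a : A) (g h : H),
    ract (ract a g) h =
      sweedler (LinearMap.mul k A) ((ract a) ∘ₗ LinearMap.mulLeft k g) (ract 1) h
  rpa3' : ∀ (a : A) (g h : H),
    ract (ract a g) h =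
      sweedler (LinearMap.mul k A) (ract 1) ((ract a) ∘ₗ LinearMap.mulLeft k g) h


section Aux

set_option maxHeartbeats 1000000
set_option synthInstance.maxHeartbeats 400000

open Coalgebra

variable {k H A : Type*} [CommRing k] [Ring H] [HopfAlgebra k H] [Ring A] [Algebra k A]

lemma mulB_tmul (ract : A →ₗ[k] H →ₗ[k] A) (g : H) (b : A) (h : H) (a : A) :
    rsmashMul₂ (LinearMap.mul k H) ract (g ⊗ₜ b) (h ⊗ₜ a) =
    TensorProduct.map (LinearMap.mulLeft k g) ((LinearMap.mulRight k a) ∘ₗ ract b)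
      (Coalgebra.comul h) := by
  rw [rsmashMul₂, TensorProduct.curry_apply, rsmashMul]
  simp only [LinearMap.comp_apply, LinearEquiv.coe_coe, LinearMap.lTensor_tmul,
    LinearMap.rTensor_tmul]
  generalize (Coalgebra.comul (R := k) h) = w
  induction w using TensorProduct.induction_on with
  | zero => simp
  | tmul x y =>
      simp [TensorProduct.tensorTensorTensorComm_tmul, LinearMap.mul'_apply,
        LinearMap.mul_apply']
  | add x y hx hy =>
      simp only [map_add, TensorProduct.tmul_add, TensorProduct.add_tmul] at *
      rw [hx, hy]

lemma mulB_repr (ract : A →ₗ[k] H →ₗ[k] A) (g : H) (b : A) {h : H} (a : A) {ι : Type*}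
    (ρ : Coalgebra.Repr k h ι) :
    rsmashMul₂ (LinearMap.mul k H) ract (g ⊗ₜ b) (h ⊗ₜ a) =
    ∑ i ∈ ρ.index, (g * ρ.left i) ⊗ₜ[k] (ract b (ρ.right i) * a) := by
  rw [mulB_tmul, ← ρ.eq, map_sum]
  simp [LinearMap.mul_apply']

/-- Explicit representation of `comul (h * h')` from representations of `h, h'`. -/
noncomputable def mulRepr {h h' : H} {ι ι' : Type*} (r : Coalgebra.Repr k h ι) (r' : Coalgebra.Repr k h' ι') :
    Coalgebra.Repr k (h * h') (ι × ι') where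
  index := r.index ×ˢ r'.index
  left := fun p => r.left p.1 * r'.left p.2
  right := fun p => r.right p.1 * r'.right p.2
  eq := by
    rw [Bialgebra.comul_mul, ← r.eq, ← r'.eq, Finset.sum_mul_sum, Finset.sum_product]
    simp [Algebra.TensorProduct.tmul_mul_tmul]

end Aux

section Aux2

set_option maxHeartbeats 1000000
set_option synthInstance.maxHeartbeats 400000

open Coalgebra

variable {k H A : Type*} [CommRing k] [Ring H] [HopfAlgebra k H] [Ring A] [Algebra k A]

lemma sweedler_repr {f g : H →ₗ[k] A} {h : H} {ι : Type*} (ρ : Coalgebra.Repr k h ι) :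
    sweedler (LinearMap.mul k A) f g h = ∑ i ∈ ρ.index, f (ρ.left i) * g (ρ.right i) := by
  rw [sweedler, LinearMap.comp_apply, ← ρ.eq, map_sum]
  simp [LinearMap.mul_apply']

lemma key {ract : A →ₗ[k] H →ₗ[k] A} (hr : IsRightPartialAction k ract) (b a : A) (x : H)
    {l : H} {ι : Type*} (ρ : Coalgebra.Repr k l ι) :
    ract (ract b x * a) l
      = ∑ s ∈ ρ.index, ract b (x * ρ.left s) * ract a (ρ.right s) := by
  classical
  let σ : ∀ s : ρ.ι, Coalgebra.Repr k (ρ.left s) (H × H) := fun s => ℛ k (ρ.left s)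
  let τ : ∀ s : ρ.ι, Coalgebra.Repr k (ρ.right s) (H × H) := fun s => ℛ k (ρ.right s)
  have E := Coalgebra.sum_tmul_tmul_eq ρ σ τ
  set Ψ : H ⊗[k] (H ⊗[k] H) →ₗ[k] A :=
    (LinearMap.mul' k A) ∘ₗ TensorProduct.map ((ract b) ∘ₗ LinearMap.mulLeft k x)
      ((LinearMap.mul' k A) ∘ₗ TensorProduct.map (ract 1) (ract a)) with hΨ
  have E2 := congrArg Ψ E
  simp only [map_sum, hΨ, LinearMap.comp_apply, TensorProduct.map_tmul,
    LinearMap.mul'_apply, LinearMap.mulLeft_apply] at E2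
  calc ract (ract b x * a) l
      = ∑ s ∈ ρ.index, ract (ract b x) (ρ.left s) * ract a (ρ.right s) := by
        rw [hr.rpa2, sweedler_repr ρ]
    _ = ∑ s ∈ ρ.index, (∑ t ∈ (σ s).index,
          ract b (x * (σ s).left t) * ract 1 ((σ s).right t)) * ract a (ρ.right s) := by
        refine Finset.sum_congr rfl fun s _ => ?_
        rw [hr.rpa3, sweedler_repr (σ s)]
        simp [LinearMap.comp_apply]
    _ = ∑ s ∈ ρ.index, ∑ t ∈ (σ s).index,
          ract b (x * (σ s).left t) * (ract 1 ((σ s).right t) * ract a (ρ.right s)) := by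
        simp [Finset.sum_mul, mul_assoc]
    _ = ∑ s ∈ ρ.index, ∑ t ∈ (τ s).index,
          ract b (x * ρ.left s) * (ract 1 ((τ s).left t) * ract a ((τ s).right t)) := E2
    _ = ∑ s ∈ ρ.index, ract b (x * ρ.left s) * ract a (ρ.right s) := by
        refine Finset.sum_congr rfl fun s _ => ?_
        rw [← Finset.mul_sum, ← sweedler_repr (τ s), ← hr.rpa2, one_mul]

lemma assoc_core {ract : A →ₗ[k] H →ₗ[k] A} (hr : IsRightPartialAction k ract)
    (g h l : H) (b a c : A) :
    rsmashMul₂ (LinearMap.mul k H) ract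
        (rsmashMul₂ (LinearMap.mul k H) ract (g ⊗ₜ b) (h ⊗ₜ a)) (l ⊗ₜ c) =
    rsmashMul₂ (LinearMap.mul k H) ract (g ⊗ₜ b)
        (rsmashMul₂ (LinearMap.mul k H) ract (h ⊗ₜ a) (l ⊗ₜ c)) := by
  classical
  set M := rsmashMul₂ (LinearMap.mul k H) ract with hM
  let rh : Coalgebra.Repr k h (H × H) := ℛ k h
  let rl : Coalgebra.Repr k l (H × H) := ℛ k l
  let a₁ : ∀ j : rl.ι, Coalgebra.Repr k (rl.left j) (H × H) := fun j => ℛ k (rl.left j)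
  let a₂ : ∀ j : rl.ι, Coalgebra.Repr k (rl.right j) (H × H) := fun j => ℛ k (rl.right j)
  have E := Coalgebra.sum_tmul_tmul_eq rl a₁ a₂
  have E2 : ∀ i : rh.ι,
      ∑ j ∈ rl.index, ∑ t ∈ (a₁ j).index,
        (g * rh.left i * (a₁ j).left t) ⊗ₜ[k]
          (ract b (rh.right i * (a₁ j).right t) * (ract a (rl.right j) * c)) =
      ∑ j ∈ rl.index, ∑ s ∈ (a₂ j).index,
        (g * rh.left i * rl.left j) ⊗ₜ[k]
          (ract b (rh.right i * (a₂ j).left s) * (ract a ((a₂ j).right s) * c)) := by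
    intro i
    have := congrArg (TensorProduct.map (LinearMap.mulLeft k (g * rh.left i))
      ((LinearMap.mul' k A) ∘ₗ TensorProduct.map ((ract b) ∘ₗ LinearMap.mulLeft k (rh.right i))
        ((LinearMap.mulRight k c) ∘ₗ ract a))) E
    simpa only [map_sum, TensorProduct.map_tmul, LinearMap.comp_apply,
      LinearMap.mul'_apply, LinearMap.mulLeft_apply, LinearMap.mulRight_apply] using this
  have hL : M (M (g ⊗ₜ b) (h ⊗ₜ a)) (l ⊗ₜ c) =
      ∑ i ∈ rh.index, ∑ j ∈ rl.index, ∑ s ∈ (a₂ j).index,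
        (g * rh.left i * rl.left j) ⊗ₜ[k]
          (ract b (rh.right i * (a₂ j).left s) * ract a ((a₂ j).right s) * c) := by
    rw [hM, mulB_repr ract g b a rh, map_sum, LinearMap.sum_apply]
    refine Finset.sum_congr rfl fun i _ => ?_
    rw [mulB_repr ract _ _ c rl]
    refine Finset.sum_congr rfl fun j _ => ?_
    rw [key hr b a (rh.right i) (a₂ j), Finset.sum_mul, TensorProduct.tmul_sum]
  have hR : M (g ⊗ₜ b) (M (h ⊗ₜ a) (l ⊗ₜ c)) =
      ∑ j ∈ rl.index, ∑ i ∈ rh.index, ∑ t ∈ (a₁ j).index,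
        (g * (rh.left i * (a₁ j).left t)) ⊗ₜ[k]
          (ract b (rh.right i * (a₁ j).right t) * (ract a (rl.right j) * c)) := by
    rw [hM, mulB_repr ract h a c rl, map_sum]
    refine Finset.sum_congr rfl fun j _ => ?_
    rw [mulB_repr ract g b _ (mulRepr rh (a₁ j))]
    unfold mulRepr
    rw [Finset.sum_product]
  rw [hL, hR]
  conv_rhs => rw [Finset.sum_comm]
  refine Finset.sum_congr rfl fun i _ => ?_
  calc ∑ j ∈ rl.index, ∑ s ∈ (a₂ j).index,
        (g * rh.left i * rl.left j) ⊗ₜ[k]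
          (ract b (rh.right i * (a₂ j).left s) * ract a ((a₂ j).right s) * c)
      = ∑ j ∈ rl.index, ∑ s ∈ (a₂ j).index,
        (g * rh.left i * rl.left j) ⊗ₜ[k]
          (ract b (rh.right i * (a₂ j).left s) * (ract a ((a₂ j).right s) * c)) := by
        simp [mul_assoc]
    _ = ∑ j ∈ rl.index, ∑ t ∈ (a₁ j).index,
        (g * rh.left i * (a₁ j).left t) ⊗ₜ[k]
          (ract b (rh.right i * (a₁ j).right t) * (ract a (rl.right j) * c)) := (E2 i).symm
    _ = ∑ j ∈ rl.index, ∑ t ∈ (a₁ j).index,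
        (g * (rh.left i * (a₁ j).left t)) ⊗ₜ[k]
          (ract b (rh.right i * (a₁ j).right t) * (ract a (rl.right j) * c)) := by
        simp [mul_assoc]

lemma mulB_assoc {ract : A →ₗ[k] H →ₗ[k] A} (hr : IsRightPartialAction k ract)
    (x y z : H ⊗[k] A) :
    rsmashMul₂ (LinearMap.mul k H) ract
        (rsmashMul₂ (LinearMap.mul k H) ract x y) z =
    rsmashMul₂ (LinearMap.mul k H) ract x
        (rsmashMul₂ (LinearMap.mul k H) ract y z) := by
  induction x using TensorProduct.induction_on with
  | zero => simp
  | add x1 x2 h1 h2 => simp only [map_add, LinearMap.add_apply, h1, h2]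
  | tmul g b =>
    induction y using TensorProduct.induction_on with
    | zero => simp
    | add y1 y2 h1 h2 => simp only [map_add, LinearMap.add_apply, h1, h2]
    | tmul h a =>
      induction z using TensorProduct.induction_on with
      | zero => simp
      | add z1 z2 h1 h2 => simp only [map_add, LinearMap.add_apply, h1, h2]
      | tmul l c => exact assoc_core hr g h l b a c

lemma mulB_one_one {ract : A →ₗ[k] H →ₗ[k] A} (hr : IsRightPartialAction k ract) :
    rsmashMul₂ (LinearMap.mul k H) ract ((1 : H) ⊗ₜ (1 : A)) ((1 : H) ⊗ₜ (1 : A))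
      = (1 : H) ⊗ₜ[k] (1 : A) := by
  rw [mulB_tmul, Bialgebra.comul_one, Algebra.TensorProduct.one_def]
  simp [hr.rpa1]

lemma mulB_right_one {ract : A →ₗ[k] H →ₗ[k] A} (hr : IsRightPartialAction k ract)
    (z : H ⊗[k] A) :
    rsmashMul₂ (LinearMap.mul k H) ract z ((1 : H) ⊗ₜ (1 : A)) = z := by
  induction z using TensorProduct.induction_on with
  | zero => simp
  | add z1 z2 h1 h2 => simp only [map_add, LinearMap.add_apply, h1, h2]
  | tmul p q =>
    rw [mulB_tmul, Bialgebra.comul_one, Algebra.TensorProduct.one_def]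
    simp [hr.rpa1]

lemma mulB_one_mem (ract : A →ₗ[k] H →ₗ[k] A) (w : H ⊗[k] A) :
    rsmashMul₂ (LinearMap.mul k H) ract ((1 : H) ⊗ₜ (1 : A)) w
      ∈ rsmashSub (LinearMap.mul k H) ract := by
  induction w using TensorProduct.induction_on with
  | zero => simp only [map_zero]; exact Submodule.zero_mem _
  | add w1 w2 h1 h2 => rw [map_add]; exact Submodule.add_mem _ h1 h2
  | tmul h a => exact Submodule.subset_span ⟨h, a, rfl⟩

end Aux2

/-- For a symmetric right partial action of `H` on `A`, the product
`(g⊗b)(h⊗a) = gh₍₁₎ ⊗ (b·h₍₂₎)a` on `H ⊗ A` is associative, and the subspace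
`H # A = (1⊗1)(H⊗A)`, spanned by the elements `h#a = h₍₁₎ ⊗ (1·h₍₂₎)a`, is closed
under the product and is a unital algebra with unit `1#1`. -/
theorem rightPartialSmashProduct_is_unital_algebra
    {k H A : Type*} [CommRing k] [Ring H] [HopfAlgebra k H] [Ring A] [Algebra k A]
    (ract : A →ₗ[k] H →ₗ[k] A) (hract : IsRightPartialAction k ract) :
    ∀ mulB : (H ⊗[k] A) →ₗ[k] (H ⊗[k] A) →ₗ[k] H ⊗[k] A,
      mulB = rsmashMul₂ (LinearMap.mul k H) ract →
    ∀ u : H ⊗[k] A, u = mulB ((1 : H) ⊗ₜ (1 : A)) ((1 : H) ⊗ₜ (1 : A)) →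
      (∀ x y z : H ⊗[k] A, mulB (mulB x y) z = mulB x (mulB y z)) ∧
      (∀ x ∈ rsmashSub (LinearMap.mul k H) ract, ∀ y ∈ rsmashSub (LinearMap.mul k H) ract,
        mulB x y ∈ rsmashSub (LinearMap.mul k H) ract) ∧
      (u ∈ rsmashSub (LinearMap.mul k H) ract) ∧
      (∀ z ∈ rsmashSub (LinearMap.mul k H) ract, mulB u z = z ∧ mulB z u = z) := by
  intro mulB hm u hu
  subst hm
  have hu1 : u = (1 : H) ⊗ₜ[k] (1 : A) := hu.trans (mulB_one_one hract)
  refine ⟨mulB_assoc hract, ?_, ?_, ?_⟩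
  · intro x hx y hy
    induction hx using Submodule.span_induction with
    | mem x hxs =>
        obtain ⟨h, a, rfl⟩ := hxs
        rw [mulB_assoc hract]
        exact mulB_one_mem ract _
    | zero => simp only [map_zero, LinearMap.zero_apply]; exact Submodule.zero_mem _
    | add x1 x2 _ _ p1 p2 =>
        rw [map_add, LinearMap.add_apply]; exact Submodule.add_mem _ p1 p2
    | smul r x1 _ p1 =>
        rw [map_smul, LinearMap.smul_apply]; exact Submodule.smul_mem _ _ p1
  · exact Submodule.subset_span ⟨1, 1, hu⟩
  · intro z hz
    constructor
    · rw [hu1]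
      clear hu hu1
      induction hz using Submodule.span_induction with
      | mem z hzs =>
          obtain ⟨h, a, rfl⟩ := hzs
          rw [← mulB_assoc hract, mulB_one_one hract]
      | zero => simp
      | add z1 z2 _ _ p1 p2 => rw [map_add, p1, p2]
      | smul r z1 _ p1 => rw [map_smul, p1]
    · rw [hu1]
      exact mulB_right_one hract z
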